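/- Soundness and completeness of KC45: a modal formula is a theorem of the Hilbert system KC45 if and only if it is true at every world of every classical Kripke model whose accessibility relation is transitive and Euclidean and which satisfies the C-propagation condition. -/

import Mathlib

/-- Modal formulas: atoms, negation, conjunction, disjunction, box. -/
inductive Formula : Type where
  | atom : ℕ → Formula
  | neg : Formula → Formula
  | and : Formula → Formula → Formula
  | or : Formula → Formula → Formula
  | box : Formula → Formula

/-- φ → ψ abbreviates ¬φ ∨ ψ. -/
def Formula.imp (φ ψ : Formula) : Formula := .or (.neg φ) ψ

/-- Classical propositional evaluation treating boxed subformulas atomically. -/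
def evalT (v : Formula → Bool) : Formula → Bool
  | .atom n => v (.atom n)
  | .neg φ => ! evalT v φ
  | .and φ ψ => evalT v φ && evalT v ψ
  | .or φ ψ => evalT v φ || evalT v ψ
  | .box φ => v (.box φ)

/-- A classical propositional tautology (boxed subformulas treated as atoms). -/
def Tautology (φ : Formula) : Prop := ∀ v : Formula → Bool, evalT v φ = true


/-- The Hilbert system KC45: classical tautologies, schemas K, C, 4, 5,
closed under modus ponens and necessitation. -/
inductive KC45 : Formula → Prop where
  | taut {φ : Formula} : Tautology φ → KC45 φ
  | axK (φ ψ : Formula) :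
      KC45 (Formula.imp (.box (Formula.imp φ ψ)) (Formula.imp (.box φ) (.box ψ)))
  | axC (φ : Formula) : KC45 (Formula.imp φ (.box φ))
  | ax4 (φ : Formula) : KC45 (Formula.imp (.box φ) (.box (.box φ)))
  | ax5 (φ : Formula) : KC45 (Formula.imp (.neg (.box φ)) (.box (.neg (.box φ))))
  | mp {φ ψ : Formula} : KC45 (Formula.imp φ ψ) → KC45 φ → KC45 ψ
  | nec {φ : Formula} : KC45 φ → KC45 (.box φ)

/-- Kripke satisfaction. -/
def Sat {W : Type} (R : W → W → Prop) (V : W → ℕ → Bool) : W → Formula → Prop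
  | w, .atom n => V w n = true
  | w, .neg φ => ¬ Sat R V w φ
  | w, .and φ ψ => Sat R V w φ ∧ Sat R V w ψ
  | w, .or φ ψ => Sat R V w φ ∨ Sat R V w ψ
  | w, .box φ => ∀ w', R w w' → Sat R V w' φ

namespace KC45Aux

def bot : Formula := .and (.atom 0) (.neg (.atom 0))
def beta : Formula := .box bot
def tr : Formula → Formula
  | .atom n => .atom n
  | .neg φ => .neg (tr φ)
  | .and φ ψ => .and (tr φ) (tr ψ)
  | .or φ ψ => .or (tr φ) (tr ψ)
  | .box φ => .or beta (tr φ)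
def iffF (a b : Formula) : Formula := .and (a.imp b) (b.imp a)

lemma mp1 {a c : Formula} (h : Tautology (a.imp c)) (ha : KC45 a) : KC45 c :=
  (KC45.taut h).mp ha
lemma mp2 {a b c : Formula} (h : Tautology (a.imp (b.imp c)))
    (ha : KC45 a) (hb : KC45 b) : KC45 c :=
  ((KC45.taut h).mp ha).mp hb
lemma mp3 {a b c d : Formula} (h : Tautology (a.imp (b.imp (c.imp d))))
    (ha : KC45 a) (hb : KC45 b) (hc : KC45 c) : KC45 d :=
  (((KC45.taut h).mp ha).mp hb).mp hc

lemma boxElim (ψ : Formula) : KC45 ((Formula.box ψ).imp (.or beta ψ)) := by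
  have t1 : KC45 (ψ.imp ((Formula.neg ψ).imp bot)) := by
    apply KC45.taut; intro v
    simp only [Formula.imp, evalT, bot]
    cases evalT v ψ <;> cases v (Formula.atom 0) <;> rfl
  have h1 : KC45 ((Formula.box ψ).imp (.box ((Formula.neg ψ).imp bot))) :=
    (KC45.axK ψ _).mp t1.nec
  have h2 := KC45.axK (Formula.neg ψ) bot
  have h3 := KC45.axC (Formula.neg ψ)
  refine mp3 ?_ h1 h2 h3
  intro v
  simp only [Formula.imp, evalT, beta]
  cases evalT v ψ <;> cases v (Formula.box ψ) <;>
    cases v (Formula.box (Formula.or (Formula.neg (Formula.neg ψ)) bot)) <;>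
    cases v (Formula.box (Formula.neg ψ)) <;> cases v (Formula.box bot) <;> rfl

lemma boxIntro (ψ : Formula) : KC45 ((Formula.or beta ψ).imp (.box ψ)) := by
  have h1 : KC45 (bot.imp ψ) := by
    apply KC45.taut; intro v
    simp only [Formula.imp, evalT, bot]
    cases evalT v ψ <;> cases v (Formula.atom 0) <;> rfl
  have h2 : KC45 (beta.imp (.box ψ)) := (KC45.axK bot ψ).mp h1.nec
  have h3 := KC45.axC ψ
  refine mp2 ?_ h2 h3
  intro v
  simp only [Formula.imp, evalT, beta]
  cases evalT v ψ <;> cases v (Formula.box ψ) <;> cases v (Formula.box bot) <;> rfl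

lemma trEquiv : ∀ φ : Formula, KC45 (iffF φ (tr φ)) := by
  intro φ
  induction φ with
  | atom n =>
      apply KC45.taut; intro v
      simp only [iffF, tr, Formula.imp, evalT]
      cases v (Formula.atom n) <;> rfl
  | neg φ ih =>
      refine mp1 ?_ ih
      intro v
      simp only [iffF, tr, Formula.imp, evalT]
      cases evalT v φ <;> cases evalT v (tr φ) <;> rfl
  | and φ ψ ihφ ihψ =>
      refine mp2 ?_ ihφ ihψ
      intro v
      simp only [iffF, tr, Formula.imp, evalT]
      cases evalT v φ <;> cases evalT v (tr φ) <;>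
        cases evalT v ψ <;> cases evalT v (tr ψ) <;> rfl
  | or φ ψ ihφ ihψ =>
      refine mp2 ?_ ihφ ihψ
      intro v
      simp only [iffF, tr, Formula.imp, evalT]
      cases evalT v φ <;> cases evalT v (tr φ) <;>
        cases evalT v ψ <;> cases evalT v (tr ψ) <;> rfl
  | box φ ih =>
      refine mp3 ?_ (boxElim φ) (boxIntro φ) ih
      intro v
      simp only [iffF, tr, Formula.imp, evalT, beta]
      cases evalT v φ <;> cases evalT v (tr φ) <;>
        cases v (Formula.box φ) <;> cases v (Formula.box bot) <;> rfl

lemma sat_of_taut {W : Type} (R : W → W → Prop) (V : W → ℕ → Bool) (w : W)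
    {φ : Formula} (h : Tautology φ) : Sat R V w φ := by
  classical
  let v : Formula → Bool := fun ψ => decide (Sat R V w ψ)
  have key : ∀ χ : Formula, evalT v χ = true ↔ Sat R V w χ := by
    intro χ
    induction χ with
    | atom n => simp only [evalT, Sat, v, decide_eq_true_iff]; exact @decide_eq_true_iff _ (Classical.propDecidable _)
    | neg χ ih => simp only [evalT, Sat, Bool.not_eq_true', ← ih]; simp
    | and χ₁ χ₂ ih₁ ih₂ => simp only [evalT, Sat, Bool.and_eq_true, ih₁, ih₂]
    | or χ₁ χ₂ ih₁ ih₂ => simp only [evalT, Sat, Bool.or_eq_true, ih₁, ih₂]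
    | box χ ih => simp only [evalT, v, decide_eq_true_iff]
  exact (key φ).mp (h v)

lemma soundness {φ : Formula} (h : KC45 φ)
    {W : Type} (R : W → W → Prop) (V : W → ℕ → Bool)
    (htrans : ∀ w w' w'' : W, R w w' → R w' w'' → R w w'')
    (heucl : ∀ w w' w'' : W, R w w' → R w w'' → R w' w'')
    (hprop : ∀ (ψ : Formula) (w w' : W), R w w' → Sat R V w ψ → Sat R V w' ψ) :
    ∀ w : W, Sat R V w φ := by
  induction h with
  | taut ht => exact fun w => sat_of_taut R V w ht
  | axK φ ψ =>
      intro w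
      simp only [Formula.imp, Sat]
      rcases Classical.em (∀ w', R w w' → ¬ Sat R V w' φ ∨ Sat R V w' ψ) with h1 | h1
      · rcases Classical.em (∀ w', R w w' → Sat R V w' φ) with h2 | h2
        · right; right; intro w' hr
          rcases h1 w' hr with h | h
          · exact absurd (h2 w' hr) h
          · exact h
        · right; left; exact h2
      · left; exact h1
  | axC φ =>
      intro w
      simp only [Formula.imp, Sat]
      rcases Classical.em (Sat R V w φ) with h1 | h1
      · right; intro w' hr; exact hprop φ w w' hr h1
      · left; exact h1
  | ax4 φ =>
      intro w
      simp only [Formula.imp, Sat]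
      rcases Classical.em (∀ w', R w w' → Sat R V w' φ) with h1 | h1
      · right; intro w' hr w'' hr'; exact h1 w'' (htrans _ _ _ hr hr')
      · left; exact h1
  | ax5 φ =>
      intro w
      simp only [Formula.imp, Sat]
      rcases Classical.em (∀ w', R w w' → Sat R V w' φ) with h1 | h1
      · left; intro h; exact h h1
      · right
        push_neg at h1
        obtain ⟨w0, hr0, hn0⟩ := h1
        intro w' hr hbox
        exact hn0 (hbox w0 (heucl _ _ _ hr hr0))
  | mp h1 h2 ih1 ih2 =>
      intro w
      have := ih1 w
      simp only [Formula.imp, Sat] at this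
      rcases this with h | h
      · exact absurd (ih2 w) h
      · exact h
  | nec h ih => intro w w' _; exact ih w'

end KC45Aux

/-- Soundness and completeness of KC45: a modal formula is a
theorem of KC45 iff it is true at every world of every classical Kripke model
whose accessibility relation is transitive and Euclidean and which satisfies
the C-propagation condition. -/
theorem KC45_soundness_completeness (φ : Formula) :
    KC45 φ ↔
      ∀ (W : Type) (R : W → W → Prop) (V : W → ℕ → Bool),
        (∀ w w' w'' : W, R w w' → R w' w'' → R w w'') →
        (∀ w w' w'' : W, R w w' → R w w'' → R w' w'') →
        (∀ (ψ : Formula) (w w' : W), R w w' → Sat R V w ψ → Sat R V w' ψ) →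
        ∀ w : W, Sat R V w φ := by
  open KC45Aux in
  constructor
  · intro h W R V htrans heucl hprop
    exact KC45Aux.soundness h R V htrans heucl hprop
  · intro H
    have hT : Tautology (KC45Aux.tr φ) := by
      intro v
      set R : Unit → Unit → Prop := fun _ _ => v (Formula.box KC45Aux.bot) = false with hR
      set V : Unit → ℕ → Bool := fun _ n => v (.atom n) with hV
      have hsat := H Unit R V (fun _ _ _ h _ => h) (fun _ _ _ _ h => h)
        (by intro ψ w w' _ hs; cases w; cases w'; exact hs)
      have key : ∀ χ : Formula, Sat R V () χ ↔ evalT v (KC45Aux.tr χ) = true := by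
        intro χ
        induction χ with
        | atom n => simp [Sat, KC45Aux.tr, evalT, hV]
        | neg χ ih => simp only [Sat, KC45Aux.tr, evalT, Bool.not_eq_true', ih]; simp
        | and χ₁ χ₂ ih₁ ih₂ =>
            simp only [Sat, KC45Aux.tr, evalT, Bool.and_eq_true, ih₁, ih₂]
        | or χ₁ χ₂ ih₁ ih₂ =>
            simp only [Sat, KC45Aux.tr, evalT, Bool.or_eq_true, ih₁, ih₂]
        | box χ ih =>
            simp only [Sat, KC45Aux.tr, evalT, Bool.or_eq_true, KC45Aux.beta]
            cases hb : v (Formula.box KC45Aux.bot) with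
            | true =>
                constructor
                · intro _; left; rfl
                · intro _ w' hr; rw [hR] at hr; simp [hb] at hr
            | false =>
                constructor
                · intro hs
                  right; exact ih.mp (hs () (by rw [hR]; exact hb))
                · rintro (h | h)
                  · exact absurd h (by simp [hb])
                  · intro w' _; cases w'; exact ih.mpr h
      exact (key φ).mp (hsat ())
    have h1 : KC45 (KC45Aux.tr φ) := KC45.taut hT
    have h2 : KC45 ((KC45Aux.tr φ).imp φ) := by
      refine KC45Aux.mp1 ?_ (KC45Aux.trEquiv φ)
      intro v
      simp only [KC45Aux.iffF, Formula.imp, evalT]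
      cases evalT v φ <;> cases evalT v (KC45Aux.tr φ) <;> rfl
    exact h2.mp h1
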